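/- For any Dyck path D, mir(D) has the same size as D, and the number of non-initial contacts of D equals the length of the final maximal run of down steps of mir(D). -/

import Mathlib

/-- A Dyck path: a word in `u = true`, `d = false` with equally many `u`'s and `d`'s,
every prefix of which has at least as many `u`'s as `d`'s. -/
def IsDyck (w : List Bool) : Prop :=
  w.count true = w.count false ∧ ∀ p, p <+: w → p.count false ≤ p.count true

/-- The number of non-initial contacts of a path: the number of nonempty balanced
prefixes. -/
def ncontacts (w : List Bool) : ℕ :=
  ((List.range w.length).filter
    (fun j => (w.take (j + 1)).count true = (w.take (j + 1)).count false)).length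

/-- The involution `mir` on Dyck paths, defined recursively by `mir ε = ε` and
`mir (D₁ u D₂ d) = mir D₂ u mir D₁ d`, where a nonempty Dyck path is uniquely
written `D₁ u D₂ d` with `D₁, D₂` Dyck paths and `D₂` starting right after the
last non-initial contact before the endpoint (so `D₁` is the longest proper
balanced prefix). -/
def mir (w : List Bool) : List Bool :=
  if hw : w = [] then []
  else
    let e := w.dropLast
    let j := ((List.range e.length).filter
      (fun j => (e.take j).count true = (e.take j).count false)).foldr max 0
    mir (e.drop (j + 1)) ++ true :: (mir (e.take j) ++ [false])
termination_by w.length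
decreasing_by
  all_goals
    have hp := List.length_pos_iff.mpr hw
    simp only [List.length_drop, List.length_take, List.length_dropLast]
    omega

def J (w : List Bool) : ℕ :=
  ((List.range w.dropLast.length).filter
      (fun j => ((w.dropLast.take j).count true = (w.dropLast.take j).count false))).foldr max 0

lemma mir_nil : mir [] = [] := by rw [mir]; simp

lemma mir_eq (w : List Bool) (hw : w ≠ []) :
    mir w = mir (w.dropLast.drop (J w + 1)) ++ true :: (mir (w.dropLast.take (J w)) ++ [false]) := by
  conv_lhs => rw [mir]
  simp only [hw, dif_neg, J]
  rfl

lemma le_foldr_max {l : List ℕ} {x : ℕ} (hx : x ∈ l) : x ≤ l.foldr max 0 := by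
  induction l with
  | nil => simp at hx
  | cons a t ih =>
    rcases List.mem_cons.mp hx with rfl | hx
    · exact le_max_left _ _
    · exact le_trans (ih hx) (le_max_right _ _)

lemma foldr_max_mem (l : List ℕ) : l.foldr max 0 ∈ l ∨ l.foldr max 0 = 0 := by
  induction l with
  | nil => right; rfl
  | cons a t ih =>
    simp only [List.foldr_cons]
    rcases Nat.le_total (t.foldr max 0) a with h | h
    · left; rw [Nat.max_eq_left h]; exact List.mem_cons_self
    · rw [Nat.max_eq_right h]
      rcases ih with h' | h'
      · left; exact List.mem_cons_of_mem _ h'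
      · right; exact h'

lemma count_tf (w : List Bool) : w.count true + w.count false = w.length := by
  induction w with
  | nil => rfl
  | cons a t ih => cases a <;> simp [List.count_cons] <;> omega

lemma takeWhile_append_false {p : Bool → Bool} {l₁ : List Bool} (l₂ : List Bool)
    (h : ∃ x ∈ l₁, p x = false) :
    (l₁ ++ l₂).takeWhile p = l₁.takeWhile p := by
  induction l₁ with
  | nil => simp at h
  | cons a t ih =>
    obtain ⟨x, hx, hpx⟩ := h
    rcases List.mem_cons.mp hx with rfl | hx
    · simp [List.takeWhile_cons, hpx]
    · cases hpa : p a
      · simp [List.takeWhile_cons, hpa]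
      · simp [List.takeWhile_cons, hpa, ih ⟨x, hx, hpx⟩]

lemma ncontacts_eq (w : List Bool) :
    ncontacts w = ((Finset.range w.length).filter
      (fun j => (w.take (j+1)).count true = (w.take (j+1)).count false)).card := rfl

lemma main : ∀ N (w : List Bool), w.length ≤ N → IsDyck w →
    (mir w).count true = w.count true ∧
    ((mir w).reverse.takeWhile (fun c => c = false)).length = ncontacts w := by
  intro N
  induction N with
  | zero =>
    intro w hwN _
    have hw : w = [] := List.eq_nil_of_length_eq_zero (Nat.le_zero.mp hwN)
    subst hw
    simp [mir_nil, ncontacts]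
  | succ N ih =>
    intro w hwN hD
    by_cases hw : w = []
    · subst hw; simp [mir_nil, ncontacts]
    set e := w.dropLast with he
    -- last character is false
    have hlast : w = e ++ [false] := by
      have h1 : e ++ [w.getLast hw] = w := List.dropLast_append_getLast hw
      have hpe : e <+: w := List.dropLast_prefix w
      cases hc : w.getLast hw with
      | false => rw [hc] at h1; exact h1.symm
      | true =>
        exfalso
        have h2 : w.count true = e.count true + 1 := by
          rw [← h1, hc]; simp [List.count_append]
        have h3 : w.count false = e.count false := by
          rw [← h1, hc]; simp [List.count_append]
        have h4 := hD.2 e hpe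
        have h5 := hD.1
        omega
    have hbal_e : e.count true = e.count false + 1 := by
      have h5 := hD.1
      rw [hlast] at h5
      simp [List.count_append] at h5
      omega
    have hel : 0 < e.length := by
      have hne : e ≠ [] := by intro h; rw [h] at hbal_e; simp at hbal_e
      exact List.length_pos_iff.mpr hne
    set j := J w with hj
    set L := ((List.range e.length).filter
      (fun k => ((e.take k).count true = (e.take k).count false))) with hL
    have h0L : 0 ∈ L := by
      rw [hL]
      simp [List.mem_filter, List.mem_range, hel]
    have hjL : j ∈ L := by
      rcases foldr_max_mem L with h' | h'
      · exact h'
      · have : j = L.foldr max 0 := rfl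
        rw [this, h']; exact h0L
    have hjlt : j < e.length := by
      have := List.mem_filter.mp hjL
      simpa using this.1
    have hbal1 : (e.take j).count true = (e.take j).count false := by
      have := List.mem_filter.mp hjL
      simpa using this.2
    have hmax : ∀ k, k < e.length → (e.take k).count true = (e.take k).count false → k ≤ j := by
      intro k hk hb
      apply le_foldr_max
      rw [show J w = L.foldr max 0 from rfl] at hj
      rw [← he]
      simp [List.mem_filter, List.mem_range, hk, hb]
    -- the step after D₁ is an up-step
    have hget : e.drop j = true :: e.drop (j + 1) := by
      have hcons : e.drop j = e[j] :: e.drop (j + 1) := List.drop_eq_getElem_cons hjlt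
      have htake : e.take (j + 1) = e.take j ++ [e[j]] := by
        rw [List.take_succ, List.getElem?_eq_getElem hjlt]
        rfl
      have hpre : e.take (j + 1) <+: w := (List.take_prefix _ _).trans (List.dropLast_prefix w)
      cases hc : e[j] with
      | true => rw [hc] at hcons; exact hcons
      | false =>
        exfalso
        rw [hc] at htake
        have h2 := hD.2 _ hpre
        rw [htake] at h2
        simp [List.count_append] at h2
        omega
    set D₁ := e.take j with hD₁
    set D₂ := e.drop (j + 1) with hD₂
    have hedec : e = D₁ ++ true :: D₂ := by
      conv_lhs => rw [← List.take_append_drop j e, hget]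
    have hwdec : w = D₁ ++ true :: (D₂ ++ [false]) := by
      rw [hlast, hedec]; simp
    have hD1len : D₁.length = j := by
      rw [hD₁, List.length_take]; omega
    have hD2len : D₂.length = e.length - (j + 1) := by
      rw [hD₂, List.length_drop]
    have hwlen : w.length = e.length + 1 := by
      rw [hlast]; simp
    -- D₁ is Dyck
    have hD1 : IsDyck D₁ := by
      refine ⟨hbal1, fun p hp => hD.2 p ?_⟩
      exact hp.trans ((List.take_prefix _ _).trans (List.dropLast_prefix w))
    -- D₂ is balanced
    have hbal2 : D₂.count true = D₂.count false := by
      have : e.count true = D₁.count true + 1 + D₂.count true ∧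
          e.count false = D₁.count false + D₂.count false := by
        constructor <;> (rw [hedec]; simp [List.count_append, List.count_cons]; try omega)
      omega
    -- D₂ is Dyck
    have hD2 : IsDyck D₂ := by
      refine ⟨hbal2, ?_⟩
      have key : ∀ n (p : List Bool), p.length ≤ n → p <+: D₂ →
          p.count false ≤ p.count true := by
        intro n
        induction n with
        | zero =>
          intro p hp _
          have : p = [] := List.eq_nil_of_length_eq_zero (Nat.le_zero.mp hp)
          simp [this]
        | succ n ihp =>
          intro p hp hpre
          by_contra hple
          push_neg at hple
          have hpne : p ≠ [] := by rintro rfl; simp at hple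
          obtain ⟨q, c, hqc⟩ : ∃ q c, p = q ++ [c] :=
            ⟨p.dropLast, p.getLast hpne, (List.dropLast_append_getLast hpne).symm⟩
          have hq : q.count false ≤ q.count true := by
            refine ihp q (by rw [hqc] at hp; simp at hp; omega) ?_
            exact List.IsPrefix.trans ⟨[c], hqc.symm⟩ hpre
          cases c with
          | true =>
            rw [hqc] at hple
            simp [List.count_append] at hple
            omega
          | false =>
            rw [hqc] at hple
            simp [List.count_append] at hple
            have hqbal : q.count false = q.count true := by omega
            set r := D₁ ++ true :: (q ++ [false]) with hr
            have hrpre : r <+: e := by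
              obtain ⟨t, ht⟩ := hpre
              refine ⟨t, ?_⟩
              rw [hedec, ← ht, hqc, hr]
              simp
            have hrbal : r.count true = r.count false := by
              rw [hr]; simp [List.count_append, List.count_cons]; omega
            have hrlen : r.length ≤ e.length := hrpre.length_le
            have hrtake : e.take r.length = r := (List.prefix_iff_eq_take.mp hrpre).symm
            rcases lt_or_eq_of_le hrlen with hlt | heq
            · have hle := hmax r.length hlt (by rw [hrtake]; exact hrbal)
              have hlen2 : j + q.length + 2 ≤ r.length := by
                rw [hr]
                simp [hD1len]
                omega
              omega
            · have he2 : r = e := List.IsPrefix.eq_of_length hrpre heq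
              rw [he2] at hrbal
              omega
      exact fun p hp => key p.length p le_rfl hp
    have hIH1 := ih D₁ (by omega) hD1
    have hIH2 := ih D₂ (by omega) hD2
    have hmir : mir w = mir D₂ ++ true :: (mir D₁ ++ [false]) := mir_eq w hw
    have hnc : ncontacts w = ncontacts D₁ + 1 := by
      rw [ncontacts_eq, ncontacts_eq]
      have hPe : ∀ i, i + 1 ≤ e.length → w.take (i + 1) = e.take (i + 1) := by
        intro i hi
        rw [hlast, List.take_append_of_le_length hi]
      have hset : (Finset.range w.length).filter
            (fun i => (w.take (i + 1)).count true = (w.take (i + 1)).count false)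
          = insert e.length ((Finset.range j).filter
            (fun i => (w.take (i + 1)).count true = (w.take (i + 1)).count false)) := by
        ext i
        simp only [Finset.mem_insert, Finset.mem_filter, Finset.mem_range]
        constructor
        · rintro ⟨hi, hPi⟩
          by_cases hie : i = e.length
          · left; exact hie
          right
          have hie' : i + 1 ≤ e.length := by omega
          have hPi' : (e.take (i + 1)).count true = (e.take (i + 1)).count false := by
            rw [← hPe i hie']; exact hPi
          have hij : i + 1 ≤ j := by
            rcases lt_or_eq_of_le hie' with hlt | heq
            · exact hmax (i + 1) hlt hPi'
            · exfalso
              rw [heq, List.take_length] at hPi'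
              omega
          exact ⟨by omega, hPi⟩
        · rintro (rfl | ⟨hij, hPi⟩)
          · refine ⟨by omega, ?_⟩
            rw [show e.length + 1 = w.length from hwlen.symm, List.take_length]
            exact hD.1
          · exact ⟨by omega, hPi⟩
      rw [hset, Finset.card_insert_of_notMem (by
        simp only [Finset.mem_filter, Finset.mem_range]
        rintro ⟨hcon, -⟩
        omega)]
      rw [hD1len]
      congr 1
      refine congrArg Finset.card ?_
      apply Finset.filter_congr
      intro i hi
      simp only [Finset.mem_range] at hi
      have h1 : w.take (i + 1) = D₁.take (i + 1) := by
        rw [hPe i (by omega), hD₁, List.take_take, Nat.min_eq_left (by omega)]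
      simp [h1]
    constructor
    · rw [hmir]
      conv_rhs => rw [hwdec]
      simp [List.count_append, List.count_cons]
      omega
    · rw [hnc, hmir]
      have hrev : (mir D₂ ++ true :: (mir D₁ ++ [false])).reverse
          = false :: ((mir D₁).reverse ++ true :: (mir D₂).reverse) := by
        simp
      rw [hrev, List.takeWhile_cons]
      simp only [decide_true, if_true]
      by_cases h1 : D₁ = []
      · rw [h1, mir_nil]
        simp [ncontacts, List.takeWhile_cons]
      · have hct : 0 < (mir D₁).count true := by
          rw [hIH1.1]
          have h3 := count_tf D₁
          have hlp : 0 < D₁.length := List.length_pos_iff.mpr h1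
          have h4 := hD1.1
          omega
        have hmem : true ∈ (mir D₁).reverse := by
          rw [List.mem_reverse]
          exact List.count_pos_iff.mp hct
        rw [takeWhile_append_false _ ⟨true, hmem, by simp⟩]
        have hIH12 := hIH1.2
        rw [show (fun c : Bool => decide (c = false)) = (fun c => !c) from
          funext fun c => by cases c <;> rfl] at hIH12
        simp [hIH12]

theorem stmt14 (D : List Bool) (h : IsDyck D) :
    (mir D).count true = D.count true ∧
    ((mir D).reverse.takeWhile (fun c => c = false)).length = ncontacts D :=
  main D.length D le_rfl h
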